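/- Let m be an odd natural number and let d : ℕ → ℤ satisfy d(k) = d(m − k) for all k ≤ m. Then Σ_{k=0}^m (−1)^{k+1} · k · d(k) ≡ m · (Σ_{k=0, k even}^m d(k)) modulo 4. -/

import Mathlib

open Finset

lemma sum_pairing (t : ℕ) (f : ℕ → ℤ) :
    ∑ k ∈ range (2 * t), f k = ∑ k ∈ range t, (f k + f (2 * t - 1 - k)) := by
  rw [sum_add_distrib, range_eq_Ico,
    ← Finset.sum_Ico_consecutive _ (Nat.zero_le t) (by omega : t ≤ 2 * t)]
  congr 1
  · rw [range_eq_Ico]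
  rw [Finset.sum_Ico_eq_sum_range]
  have ht : 2 * t - t = t := by omega
  rw [ht, ← Finset.sum_range_reflect (fun j => f (t + j)) t]
  apply sum_congr rfl
  intro j hj
  simp only [mem_range] at hj
  congr 1
  omega

/-- Arithmetic form of part (i) of Lemma 4.8 of the paper: if `m` is odd and
`d : ℕ → ℤ` satisfies the symmetry `d k = d (m - k)` for `k ≤ m`, then
`Σ_{k=0}^m (-1)^{k+1} k d(k) ≡ m · Σ_{k even, k ≤ m} d(k)  (mod 4)`. -/
theorem alternating_sum_modeq_four
    (m : ℕ) (hm : Odd m)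
    (d : ℕ → ℤ) (hd : ∀ k ≤ m, d k = d (m - k)) :
    (∑ k ∈ Finset.range (m + 1), (-1 : ℤ) ^ (k + 1) * k * d k)
      ≡ (m : ℤ) * ∑ k ∈ (Finset.range (m + 1)).filter (fun k => Even k), d k [ZMOD 4] := by
  obtain ⟨h, rfl⟩ := hm
  have hrange : 2 * h + 1 + 1 = 2 * (h + 1) := by ring
  rw [Finset.sum_filter, hrange, sum_pairing, sum_pairing]
  rw [Int.modEq_iff_dvd, Finset.mul_sum, ← Finset.sum_sub_distrib]
  apply Finset.dvd_sum
  intro k hk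
  simp only [mem_range] at hk
  have hkm : k ≤ 2 * h + 1 := by omega
  have hidx : 2 * (h + 1) - 1 - k = 2 * h + 1 - k := by omega
  rw [hidx]
  have hdk : d (2 * h + 1 - k) = d k := (hd k hkm).symm
  rw [hdk]
  have hc : ((2 * h + 1 - k : ℕ) : ℤ) = 2 * (h : ℤ) + 1 - k := by omega
  rcases Nat.even_or_odd k with hk2 | hk2
  · have hodd : Odd (2 * h + 1 - k) := Nat.Odd.sub_even hkm (by exact ⟨h, by ring⟩) hk2
    have e1 : (-1 : ℤ) ^ (k + 1) = -1 := Odd.neg_one_pow hk2.add_one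
    have e2 : (-1 : ℤ) ^ (2 * h + 1 - k + 1) = 1 := Even.neg_one_pow hodd.add_one
    rw [e1, e2, if_pos hk2, if_neg (Nat.not_even_iff_odd.mpr hodd)]
    obtain ⟨j, hj⟩ := hk2
    have hkc : (k : ℤ) = j + j := by exact_mod_cast hj
    refine ⟨(j : ℤ) * d k, ?_⟩
    rw [hc]
    push_cast
    rw [hkc]
    ring
  · have heven : Even (2 * h + 1 - k) := Nat.Odd.sub_odd (by exact ⟨h, by ring⟩) hk2
    have e1 : (-1 : ℤ) ^ (k + 1) = 1 := Even.neg_one_pow hk2.add_one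
    have e2 : (-1 : ℤ) ^ (2 * h + 1 - k + 1) = -1 := Odd.neg_one_pow heven.add_one
    rw [e1, e2, if_neg (Nat.not_even_iff_odd.mpr hk2), if_pos heven]
    obtain ⟨j, hj⟩ := hk2
    have hkc : (k : ℤ) = 2 * j + 1 := by exact_mod_cast hj
    refine ⟨((h : ℤ) - j) * d k, ?_⟩
    rw [hc]
    push_cast
    rw [hkc]
    ring
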